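/- Let φ be a solution on (0,∞) of φ'' + (2/r)φ' = sin(2φ)/r² + (φ − sin φ cos φ)(1 − cos 2φ)/r⁴. Then the function W(r) = r⁴ φ'(r)² − 2r² sin²φ(r) − (φ(r) − sin φ(r) cos φ(r))² satisfies W'(r) = −4r sin²φ(r); in particular W is nonincreasing, and strictly decreasing on any interval where sin φ does not vanish identically. -/

import Mathlib

open Real Set

/-- The monotone quantity `W(r) = r⁴ φ'(r)² − 2r² sin²φ(r) − (φ(r) − sin φ(r) cos φ(r))²`. -/
noncomputable def Wfun (φ φ' : ℝ → ℝ) (r : ℝ) : ℝ :=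
  r^4 * (φ' r)^2 - 2 * r^2 * Real.sin (φ r)^2 -
    (φ r - Real.sin (φ r) * Real.cos (φ r))^2

theorem stmt4 (φ φ' φ'' : ℝ → ℝ)
    (hd1 : ∀ r ∈ Set.Ioi (0:ℝ), HasDerivAt φ (φ' r) r)
    (hd2 : ∀ r ∈ Set.Ioi (0:ℝ), HasDerivAt φ' (φ'' r) r)
    (heq : ∀ r ∈ Set.Ioi (0:ℝ),
      φ'' r + (2/r) * φ' r =
        Real.sin (2 * φ r) / r^2 +
          (φ r - Real.sin (φ r) * Real.cos (φ r)) * (1 - Real.cos (2 * φ r)) / r^4) :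
    (∀ r ∈ Set.Ioi (0:ℝ), HasDerivAt (Wfun φ φ') (-(4 * r * Real.sin (φ r)^2)) r) ∧
    AntitoneOn (Wfun φ φ') (Set.Ioi 0) ∧
    (∀ a b : ℝ, 0 < a → a < b → (∃ r ∈ Set.Ioo a b, Real.sin (φ r) ≠ 0) →
      Wfun φ φ' b < Wfun φ φ' a) := by
  have hW : ∀ r ∈ Set.Ioi (0:ℝ),
      HasDerivAt (Wfun φ φ') (-(4 * r * Real.sin (φ r)^2)) r := by
    intro r hr
    have hr0 : (0:ℝ) < r := hr
    have hrne : r ≠ 0 := ne_of_gt hr0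
    have h1 := hd1 r hr
    have h2 := hd2 r hr
    have hA : HasDerivAt (fun x : ℝ => x^4) (4*r^3) r := by
      simpa using hasDerivAt_pow 4 r
    have hB : HasDerivAt (fun x => (φ' x)^2) (2 * φ' r * φ'' r) r := by
      simpa using h2.fun_pow 2
    have hsin : HasDerivAt (fun x => Real.sin (φ x)) (Real.cos (φ r) * φ' r) r := h1.sin
    have hcos : HasDerivAt (fun x => Real.cos (φ x)) (-Real.sin (φ r) * φ' r) r := h1.cos
    have hsin2 : HasDerivAt (fun x => Real.sin (φ x)^2)
        (2 * Real.sin (φ r) * (Real.cos (φ r) * φ' r)) r := by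
      simpa using hsin.fun_pow 2
    have hsc : HasDerivAt (fun x => Real.sin (φ x) * Real.cos (φ x))
        (Real.cos (φ r) * φ' r * Real.cos (φ r) + Real.sin (φ r) * (-Real.sin (φ r) * φ' r)) r :=
      hsin.mul hcos
    have hg : HasDerivAt (fun x => φ x - Real.sin (φ x) * Real.cos (φ x))
        (φ' r - (Real.cos (φ r) * φ' r * Real.cos (φ r) + Real.sin (φ r) * (-Real.sin (φ r) * φ' r))) r :=
      h1.sub hsc
    have hg2 : HasDerivAt (fun x => (φ x - Real.sin (φ x) * Real.cos (φ x))^2)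
        (2 * (φ r - Real.sin (φ r) * Real.cos (φ r)) *
          (φ' r - (Real.cos (φ r) * φ' r * Real.cos (φ r) + Real.sin (φ r) * (-Real.sin (φ r) * φ' r)))) r := by
      simpa using hg.fun_pow 2
    have hmain := ((hA.mul hB).sub (((hasDerivAt_pow 2 r).const_mul 2).mul hsin2)).sub hg2
    have key : r^4 * φ'' r + 2*r^3*φ' r =
        r^2 * Real.sin (2 * φ r) +
          (φ r - Real.sin (φ r) * Real.cos (φ r)) * (1 - Real.cos (2 * φ r)) := by
      have h := heq r hr
      field_simp at h
      linear_combination h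
    rw [Real.sin_two_mul, Real.cos_two_mul] at key
    have hpyth := Real.sin_sq_add_cos_sq (φ r)
    refine HasDerivAt.congr_deriv (f := Wfun φ φ') hmain (Eq.symm ?_)
    push_cast
    linear_combination (-(2*φ' r)) * key +
      (2 * φ' r * (φ r - Real.sin (φ r) * Real.cos (φ r))) * hpyth
  have hanti : AntitoneOn (Wfun φ φ') (Set.Ioi 0) := by
    refine antitoneOn_of_deriv_nonpos (convex_Ioi 0) ?_ ?_ ?_
    · intro x hx
      exact ((hW x hx).continuousAt).continuousWithinAt
    · intro x hx
      rw [interior_Ioi] at hx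
      exact (hW x hx).differentiableAt.differentiableWithinAt
    · intro x hx
      rw [interior_Ioi] at hx
      rw [(hW x hx).deriv]
      have hx' : (0:ℝ) < x := hx
      have : (0:ℝ) ≤ 4 * x * Real.sin (φ x)^2 := by positivity
      linarith
  refine ⟨hW, hanti, ?_⟩
  intro a b ha hab ⟨r, hr, hs⟩
  have hb : b ∈ Set.Ioi (0:ℝ) := lt_trans ha hab
  have hle : Wfun φ φ' b ≤ Wfun φ φ' a := hanti ha hb (le_of_lt hab)
  rcases lt_or_eq_of_le hle with h | h
  · exact h
  · exfalso
    have hconst : ∀ x ∈ Set.Icc a b, Wfun φ φ' x = Wfun φ φ' b := by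
      intro x hx
      have hx0 : x ∈ Set.Ioi (0:ℝ) := lt_of_lt_of_le ha hx.1
      have h1 : Wfun φ φ' x ≤ Wfun φ φ' a := hanti ha hx0 hx.1
      have h2 : Wfun φ φ' b ≤ Wfun φ φ' x := hanti hx0 hb hx.2
      linarith
    have hrmem : r ∈ Set.Ioi (0:ℝ) := lt_trans ha hr.1
    have hnhds : Set.Ioo a b ∈ nhds r := Ioo_mem_nhds hr.1 hr.2
    have hev : (fun x => Wfun φ φ' x) =ᶠ[nhds r] fun _ => Wfun φ φ' b := by
      filter_upwards [hnhds] with x hx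
      exact hconst x ⟨le_of_lt hx.1, le_of_lt hx.2⟩
    have hderiv0 : HasDerivAt (Wfun φ φ') 0 r :=
      (hasDerivAt_const r (Wfun φ φ' b)).congr_of_eventuallyEq hev
    have huniq := (hW r hrmem).unique hderiv0
    have hsq : 0 < Real.sin (φ r)^2 :=
      lt_of_le_of_ne (sq_nonneg _) (Ne.symm (pow_ne_zero 2 hs))
    nlinarith [hrmem.out]
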